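/- Let H be an infinite-dimensional real separable Hilbert space, let A and B be positive, self-adjoint, trace-class operators on H, and let 0 ≤ α ≤ 1. Then det(I + αA + (1−α)B) ≥ det(I + A)^α · det(I + B)^{1−α}. Moreover, for 0 < α < 1, equality holds if and only if A = B. -/

import Mathlib

open MeasureTheory Filter
open scoped RealInnerProductSpace

noncomputable section

namespace KyFan16

set_option linter.unusedSectionVars false


private lemma log_le_tangent {x c : ℝ} (hx : 0 < x) (hc : 0 < c) :
    Real.log x ≤ Real.log c + x / c - 1 := by
  have h := Real.log_le_sub_one_of_pos (div_pos hx hc)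
  rw [Real.log_div (ne_of_gt hx) (ne_of_gt hc)] at h
  linarith

private lemma eq_of_log_eq_tangent {x c : ℝ} (hx : 0 < x) (hc : 0 < c)
    (h : Real.log x = Real.log c + x / c - 1) : x = c := by
  by_contra hne
  have hd : x / c ≠ 1 := fun h1 => hne ((div_eq_one_iff_eq (ne_of_gt hc)).mp h1)
  have hlt := Real.log_lt_sub_one_of_pos (div_pos hx hc) hd
  rw [Real.log_div (ne_of_gt hx) (ne_of_gt hc)] at hlt
  linarith

private lemma summable_log_one_add {f : ℕ → ℝ} (h0 : ∀ j, 0 ≤ f j) (hS : Summable f) :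
    Summable fun j => Real.log (1 + f j) :=
  Summable.of_nonneg_of_le (fun j => Real.log_nonneg (by linarith [h0 j]))
    (fun j => by
      have := Real.log_le_sub_one_of_pos (show (0:ℝ) < 1 + f j by linarith [h0 j])
      linarith) hS

private lemma jensen_log {a q : ℕ → ℝ} {d : ℝ} (ha0 : ∀ j, 0 ≤ a j)
    (hq0 : ∀ j, 0 ≤ q j) (hrow : HasSum q 1) (hd : HasSum (fun j => a j * q j) d) :
    Summable (fun j => q j * Real.log (1 + a j)) ∧
    ∑' j, q j * Real.log (1 + a j) ≤ Real.log (1 + d) ∧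
    (∑' j, q j * Real.log (1 + a j) = Real.log (1 + d) → ∀ j, q j ≠ 0 → a j = d) := by
  have hd0 : 0 ≤ d := hasSum_le (fun j => mul_nonneg (ha0 j) (hq0 j)) hasSum_zero hd
  have hc : (0:ℝ) < 1 + d := by linarith
  have hx : ∀ j, (0:ℝ) < 1 + a j := fun j => by linarith [ha0 j]
  have hlog0 : ∀ j, 0 ≤ Real.log (1 + a j) := fun j => Real.log_nonneg (by linarith [ha0 j])
  have hlogle : ∀ j, Real.log (1 + a j) ≤ a j := fun j => by
    have := Real.log_le_sub_one_of_pos (hx j); linarith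
  have hql : Summable (fun j => q j * Real.log (1 + a j)) := by
    refine Summable.of_nonneg_of_le (fun j => mul_nonneg (hq0 j) (hlog0 j)) (fun j => ?_) hd.summable
    rw [mul_comm (a j)]
    exact mul_le_mul_of_nonneg_left (hlogle j) (hq0 j)
  have key : ∀ j, q j * Real.log (1 + a j) ≤ q j * (Real.log (1 + d) + (1 + a j) / (1 + d) - 1) :=
    fun j => mul_le_mul_of_nonneg_left (log_le_tangent (hx j) hc) (hq0 j)
  have hfun : (fun j => q j * (Real.log (1 + d) + (1 + a j) / (1 + d) - 1)) =
      fun j => q j * (Real.log (1 + d) - 1) + (q j + a j * q j) * (1 + d)⁻¹ := by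
    funext j; field_simp; ring
  have hsum1 : HasSum (fun j => q j * (Real.log (1 + d) + (1 + a j) / (1 + d) - 1))
      (Real.log (1 + d)) := by
    rw [hfun]
    have h1 : HasSum (fun j => q j * (Real.log (1 + d) - 1)) (1 * (Real.log (1 + d) - 1)) :=
      hrow.mul_right _
    have h2 : HasSum (fun j => (q j + a j * q j) * (1 + d)⁻¹) ((1 + d) * (1 + d)⁻¹) :=
      (hrow.add hd).mul_right _
    have h3 := h1.add h2
    have he : 1 * (Real.log (1 + d) - 1) + (1 + d) * (1 + d)⁻¹ = Real.log (1 + d) := by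
      rw [mul_inv_cancel₀ (ne_of_gt hc)]; ring
    rwa [he] at h3
  have hineq : ∑' j, q j * Real.log (1 + a j) ≤ Real.log (1 + d) := by
    calc ∑' j, q j * Real.log (1 + a j)
        ≤ ∑' j, q j * (Real.log (1 + d) + (1 + a j) / (1 + d) - 1) :=
          Summable.tsum_le_tsum key hql hsum1.summable
      _ = Real.log (1 + d) := hsum1.tsum_eq
  refine ⟨hql, hineq, fun heq j hqj => ?_⟩
  set g := fun j => q j * (Real.log (1 + d) + (1 + a j) / (1 + d) - 1) - q j * Real.log (1 + a j)
    with hgdef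
  have hg0 : ∀ k, 0 ≤ g k := fun k => by simp only [hgdef]; linarith [key k]
  have hgs : Summable g := hsum1.summable.sub hql
  have htot : ∑' k, g k = 0 := by
    rw [hgdef, Summable.tsum_sub hsum1.summable hql, hsum1.tsum_eq, heq, sub_self]
  have hj0 : g j = 0 := by
    have hle := Summable.le_tsum hgs j (fun k _ => hg0 k)
    rw [htot] at hle
    exact le_antisymm hle (hg0 j)
  have hj0' : q j * (Real.log (1 + d) + (1 + a j) / (1 + d) - 1 - Real.log (1 + a j)) = 0 := by
    rw [mul_sub]; exact hj0
  rcases mul_eq_zero.mp hj0' with h | h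
  · exact absurd h hqj
  · have : Real.log (1 + a j) = Real.log (1 + d) + (1 + a j) / (1 + d) - 1 := by linarith
    have := eq_of_log_eq_tangent (hx j) hc this
    linarith

private lemma hadamard {a : ℕ → ℝ} {q : ℕ → ℕ → ℝ} {d : ℕ → ℝ}
    (ha0 : ∀ j, 0 ≤ a j) (haS : Summable a)
    (hq0 : ∀ i j, 0 ≤ q i j) (hrow : ∀ i, HasSum (fun j => q i j) 1)
    (hcol : ∀ j, HasSum (fun i => q i j) 1)
    (hd : ∀ i, HasSum (fun j => a j * q i j) (d i)) :
    (∀ i, 0 ≤ d i) ∧ Summable (fun i => Real.log (1 + d i)) ∧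
    ∑' j, Real.log (1 + a j) ≤ ∑' i, Real.log (1 + d i) ∧
    (∑' j, Real.log (1 + a j) = ∑' i, Real.log (1 + d i) →
      ∀ i j, q i j ≠ 0 → a j = d i) := by
  have hloga : Summable (fun j => Real.log (1 + a j)) := summable_log_one_add ha0 haS
  have J : ∀ i, Summable (fun j => q i j * Real.log (1 + a j)) ∧
      ∑' j, q i j * Real.log (1 + a j) ≤ Real.log (1 + d i) ∧
      (∑' j, q i j * Real.log (1 + a j) = Real.log (1 + d i) → ∀ j, q i j ≠ 0 → a j = d i) :=
    fun i => jensen_log ha0 (fun j => hq0 i j) (hrow i) (hd i)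
  have hd0 : ∀ i, 0 ≤ d i := fun i =>
    hasSum_le (fun j => mul_nonneg (ha0 j) (hq0 i j)) hasSum_zero (hd i)
  -- Summability of d
  have hGd : Summable (fun p : ℕ × ℕ => a p.1 * q p.2 p.1) := by
    refine (summable_prod_of_nonneg ?_).mpr ⟨?_, ?_⟩
    · intro p; exact mul_nonneg (ha0 p.1) (hq0 p.2 p.1)
    · intro j; exact ((hcol j).summable).mul_left (a j)
    · refine haS.congr (fun j => ?_)
      rw [((hcol j).mul_left (a j)).tsum_eq, mul_one]
  have hFd : Summable (fun p : ℕ × ℕ => a p.2 * q p.1 p.2) := hGd.prod_symm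
  have hdS : Summable d := by
    have h := ((summable_prod_of_nonneg
      (fun p : ℕ × ℕ => mul_nonneg (ha0 p.2) (hq0 p.1 p.2))).mp hFd).2
    exact h.congr (fun i => (hd i).tsum_eq)
  have hlogd : Summable (fun i => Real.log (1 + d i)) := summable_log_one_add hd0 hdS
  -- Summability of the double family q i j * log (1 + a j)
  have hG : Summable (fun p : ℕ × ℕ => q p.2 p.1 * Real.log (1 + a p.1)) := by
    refine (summable_prod_of_nonneg ?_).mpr ⟨?_, ?_⟩
    · intro p; exact mul_nonneg (hq0 p.2 p.1) (Real.log_nonneg (by linarith [ha0 p.1]))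
    · intro j; exact ((hcol j).summable).mul_right (Real.log (1 + a j))
    · refine hloga.congr (fun j => ?_)
      rw [((hcol j).mul_right (Real.log (1 + a j))).tsum_eq, one_mul]
  have hF : Summable (fun p : ℕ × ℕ => q p.1 p.2 * Real.log (1 + a p.2)) := hG.prod_symm
  have hmid : Summable (fun i => ∑' j, q i j * Real.log (1 + a j)) :=
    ((summable_prod_of_nonneg (fun p : ℕ × ℕ => mul_nonneg (hq0 p.1 p.2)
      (Real.log_nonneg (by linarith [ha0 p.2])))).mp hF).2
  have hswap : ∑' j, Real.log (1 + a j) = ∑' i, ∑' j, q i j * Real.log (1 + a j) := by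
    have h1 : ∑' j, ∑' i, q i j * Real.log (1 + a j)
        = ∑' i, ∑' j, q i j * Real.log (1 + a j) :=
      Summable.tsum_comm' hF (fun i => (J i).1) (fun j => ((hcol j).summable).mul_right _)
    rw [← h1]
    exact (tsum_congr fun j => by
      rw [((hcol j).mul_right (Real.log (1 + a j))).tsum_eq, one_mul]).symm
  have hineq : ∑' j, Real.log (1 + a j) ≤ ∑' i, Real.log (1 + d i) := by
    rw [hswap]
    exact Summable.tsum_le_tsum (fun i => (J i).2.1) hmid hlogd
  refine ⟨hd0, hlogd, hineq, fun heq i j hqij => ?_⟩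
  have hgapS : Summable (fun i => Real.log (1 + d i) - ∑' j, q i j * Real.log (1 + a j)) :=
    hlogd.sub hmid
  have hgap0 : ∀ k, 0 ≤ Real.log (1 + d k) - ∑' j, q k j * Real.log (1 + a j) :=
    fun k => by linarith [(J k).2.1]
  have htot : ∑' k, (Real.log (1 + d k) - ∑' j, q k j * Real.log (1 + a j)) = 0 := by
    rw [Summable.tsum_sub hlogd hmid, ← hswap, ← heq, sub_self]
  have hi0 : Real.log (1 + d i) - ∑' j, q i j * Real.log (1 + a j) = 0 := by
    have hle := Summable.le_tsum hgapS i (fun k _ => hgap0 k)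
    rw [htot] at hle
    exact le_antisymm hle (hgap0 i)
  exact (J i).2.2 (by linarith) j hqij

private lemma amgm2 {α x y : ℝ} (hα0 : 0 ≤ α) (hα1 : α ≤ 1) (hx : 1 ≤ x) (hy : 1 ≤ y) :
    α * Real.log x + (1 - α) * Real.log y ≤ Real.log (α * x + (1 - α) * y) ∧
    (0 < α → α < 1 →
      α * Real.log x + (1 - α) * Real.log y = Real.log (α * x + (1 - α) * y) → x = y) := by
  have hx0 : (0:ℝ) < x := by linarith
  have hy0 : (0:ℝ) < y := by linarith
  have hc : (0:ℝ) < α * x + (1 - α) * y := by nlinarith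
  have hu := log_le_tangent hx0 hc
  have hv := log_le_tangent hy0 hc
  have hdiv : α * (x / (α * x + (1 - α) * y)) + (1 - α) * (y / (α * x + (1 - α) * y)) = 1 := by
    rw [mul_div_assoc', mul_div_assoc', ← add_div, div_eq_one_iff_eq (ne_of_gt hc)]
  have hsum : α * (Real.log (α * x + (1 - α) * y) + x / (α * x + (1 - α) * y) - 1)
      + (1 - α) * (Real.log (α * x + (1 - α) * y) + y / (α * x + (1 - α) * y) - 1)
      = Real.log (α * x + (1 - α) * y) := by
    linear_combination hdiv
  have hαu := mul_le_mul_of_nonneg_left hu hα0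
  have hαv := mul_le_mul_of_nonneg_left hv (by linarith : (0:ℝ) ≤ 1 - α)
  refine ⟨by linarith, fun hα hα' heq => ?_⟩
  have h2 : 0 ≤ α * ((Real.log (α * x + (1 - α) * y) + x / (α * x + (1 - α) * y) - 1)
      - Real.log x) := mul_nonneg hα0 (by linarith)
  have h3 : 0 ≤ (1 - α) * ((Real.log (α * x + (1 - α) * y) + y / (α * x + (1 - α) * y) - 1)
      - Real.log y) := mul_nonneg (by linarith) (by linarith)
  have h4 : α * ((Real.log (α * x + (1 - α) * y) + x / (α * x + (1 - α) * y) - 1)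
      - Real.log x) + (1 - α) * ((Real.log (α * x + (1 - α) * y) + y / (α * x + (1 - α) * y) - 1)
      - Real.log y) = 0 := by linear_combination hsum - heq
  have h5 : (Real.log (α * x + (1 - α) * y) + x / (α * x + (1 - α) * y) - 1)
      - Real.log x = 0 := by
    rcases mul_eq_zero.mp (le_antisymm (by linarith) h2) with h | h
    · exact absurd h (ne_of_gt hα)
    · exact h
  have h6 : (Real.log (α * x + (1 - α) * y) + y / (α * x + (1 - α) * y) - 1)
      - Real.log y = 0 := by
    rcases mul_eq_zero.mp (le_antisymm (by linarith) h3) with h | h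
    · exact absurd h (ne_of_gt (by linarith : (0:ℝ) < 1 - α))
    · exact h
  have ex := eq_of_log_eq_tangent hx0 hc (by linarith)
  have ey := eq_of_log_eq_tangent hy0 hc (by linarith)
  linarith

variable {H : Type*} [NormedAddCommGroup H] [InnerProductSpace ℝ H] [CompleteSpace H]

private lemma inner_eig (ψ : HilbertBasis ℕ ℝ H) (A : H →L[ℝ] H) (a : ℕ → ℝ)
    (hAeig : ∀ j, A (ψ j) = a j • ψ j) (x : H) :
    HasSum (fun j => a j * (⟪ψ j, x⟫ * ⟪ψ j, x⟫)) ⟪A x, x⟫ := by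
  have h2 := (ψ.hasSum_repr x).mapL ((innerSL ℝ x).comp A)
  have key : (fun j => ((innerSL ℝ x).comp A) (ψ.repr x j • ψ j))
      = fun j => a j * (⟪ψ j, x⟫ * ⟪ψ j, x⟫) := by
    funext j
    simp only [ContinuousLinearMap.comp_apply, _root_.map_smul, hAeig j, innerSL_apply_apply,
      inner_smul_right, ψ.repr_apply_apply, real_inner_comm x (ψ j), smul_eq_mul]
    ring
  rw [key] at h2
  simpa [real_inner_comm] using h2

private lemma eig_of_pointwise (v : H) (φ : HilbertBasis ℕ ℝ H) (A : H →L[ℝ] H) (a : ℕ → ℝ)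
    (hA : ∀ j, A (φ j) = a j • φ j) (c : ℝ)
    (h : ∀ j, ⟪φ j, v⟫ ≠ 0 → a j = c) : A v = c • v := by
  have h1 := (φ.hasSum_repr v).mapL A
  have h3 := (φ.hasSum_repr v).const_smul c
  have hfun : (fun j => A (φ.repr v j • φ j)) = fun j => c • (φ.repr v j • φ j) := by
    funext j
    rw [_root_.map_smul, hA j]
    by_cases hz : ⟪φ j, v⟫ = 0
    · rw [φ.repr_apply_apply, hz]; simp
    · rw [h j hz, smul_comm]
  rw [hfun] at h1
  exact h1.unique h3

private lemma ext_basis (ψ : HilbertBasis ℕ ℝ H) {A B : H →L[ℝ] H}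
    (h : ∀ i, A (ψ i) = B (ψ i)) : A = B := by
  ext x
  have hA := (ψ.hasSum_repr x).mapL A
  have hB := (ψ.hasSum_repr x).mapL B
  have hfun : (fun j => A (ψ.repr x j • ψ j)) = fun j => B (ψ.repr x j • ψ j) := by
    funext j; rw [_root_.map_smul, _root_.map_smul, h j]
  rw [hfun] at hA
  exact hA.unique hB

private lemma tprod_eq_exp {f : ℕ → ℝ} (h0 : ∀ j, 0 ≤ f j) (hS : Summable f) :
    ∏' j, (1 + f j) = Real.exp (∑' j, Real.log (1 + f j)) := by
  have h2 := ((summable_log_one_add h0 hS).hasSum).rexp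
  have h3 : (Real.exp ∘ fun j => Real.log (1 + f j)) = fun j => 1 + f j := by
    funext j
    simp [Function.comp, Real.exp_log (show (0:ℝ) < 1 + f j by linarith [h0 j])]
  rw [h3] at h2
  exact h2.tprod_eq

private lemma sum_log_eq {a m : ℕ → ℝ} {q : ℕ → ℕ → ℝ}
    (ha0 : ∀ j, 0 ≤ a j) (haS : Summable a) (hm0 : ∀ i, 0 ≤ m i) (hmS : Summable m)
    (hq0 : ∀ i j, 0 ≤ q i j) (hrow : ∀ i, HasSum (fun j => q i j) 1)
    (hcol : ∀ j, HasSum (fun i => q i j) 1)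
    (hd : ∀ i, HasSum (fun j => a j * q i j) (m i))
    (hd' : ∀ j, HasSum (fun i => m i * q i j) (a j)) :
    ∑' j, Real.log (1 + a j) = ∑' i, Real.log (1 + m i) := by
  have h1 := (hadamard ha0 haS hq0 hrow hcol hd).2.2.1
  have h2 := (hadamard (q := fun j i => q i j) hm0 hmS (fun j i => hq0 i j) hcol hrow hd').2.2.1
  exact le_antisymm h1 h2

private lemma core {α : ℝ} (hα0 : 0 ≤ α) (hα1 : α ≤ 1)
    {a b m dA dB : ℕ → ℝ} {qA qB : ℕ → ℕ → ℝ}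
    (ha0 : ∀ j, 0 ≤ a j) (haS : Summable a)
    (hb0 : ∀ j, 0 ≤ b j) (hbS : Summable b)
    (hm0 : ∀ j, 0 ≤ m j) (hmS : Summable m)
    (hqA0 : ∀ i j, 0 ≤ qA i j) (hrowA : ∀ i, HasSum (fun j => qA i j) 1)
    (hcolA : ∀ j, HasSum (fun i => qA i j) 1)
    (hdA : ∀ i, HasSum (fun j => a j * qA i j) (dA i))
    (hqB0 : ∀ i j, 0 ≤ qB i j) (hrowB : ∀ i, HasSum (fun j => qB i j) 1)
    (hcolB : ∀ j, HasSum (fun i => qB i j) 1)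
    (hdB : ∀ i, HasSum (fun j => b j * qB i j) (dB i))
    (hm_eq : ∀ i, m i = α * dA i + (1 - α) * dB i) :
    (∏' j, (1 + a j)) ^ α * (∏' j, (1 + b j)) ^ (1 - α) ≤ ∏' j, (1 + m j) ∧
    (0 < α → α < 1 →
      (∏' j, (1 + a j)) ^ α * (∏' j, (1 + b j)) ^ (1 - α) = ∏' j, (1 + m j) →
      ∀ i, dA i = dB i ∧ (∀ j, qA i j ≠ 0 → a j = dA i) ∧
        (∀ j, qB i j ≠ 0 → b j = dB i)) := by
  obtain ⟨hdA0, hlogdA, hSA_le, hAeqc⟩ := hadamard ha0 haS hqA0 hrowA hcolA hdA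
  obtain ⟨hdB0, hlogdB, hSB_le, hBeqc⟩ := hadamard hb0 hbS hqB0 hrowB hcolB hdB
  have hlogm : Summable (fun i => Real.log (1 + m i)) := summable_log_one_add hm0 hmS
  set SA := ∑' j, Real.log (1 + a j) with hSAdef
  set SB := ∑' j, Real.log (1 + b j) with hSBdef
  set SM := ∑' i, Real.log (1 + m i) with hSMdef
  set TA := ∑' i, Real.log (1 + dA i) with hTAdef
  set TB := ∑' i, Real.log (1 + dB i) with hTBdef
  have hAM : ∀ i, α * Real.log (1 + dA i) + (1 - α) * Real.log (1 + dB i)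
      ≤ Real.log (1 + m i) ∧ (0 < α → α < 1 →
        α * Real.log (1 + dA i) + (1 - α) * Real.log (1 + dB i) = Real.log (1 + m i) →
        dA i = dB i) := by
    intro i
    have h := amgm2 hα0 hα1 (show (1:ℝ) ≤ 1 + dA i by linarith [hdA0 i])
      (show (1:ℝ) ≤ 1 + dB i by linarith [hdB0 i])
    have he : α * (1 + dA i) + (1 - α) * (1 + dB i) = 1 + m i := by
      rw [hm_eq i]; ring
    rw [he] at h
    exact ⟨h.1, fun h1 h2 h3 => by have := h.2 h1 h2 h3; linarith⟩
  have hmidS : Summable (fun i => α * Real.log (1 + dA i) + (1 - α) * Real.log (1 + dB i)) :=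
    (hlogdA.mul_left α).add (hlogdB.mul_left (1 - α))
  have hmid_le : ∑' i, (α * Real.log (1 + dA i) + (1 - α) * Real.log (1 + dB i)) ≤ SM :=
    Summable.tsum_le_tsum (fun i => (hAM i).1) hmidS hlogm
  have hmid_eq : ∑' i, (α * Real.log (1 + dA i) + (1 - α) * Real.log (1 + dB i))
      = α * TA + (1 - α) * TB := by
    rw [Summable.tsum_add (hlogdA.mul_left α) (hlogdB.mul_left (1 - α)), tsum_mul_left, tsum_mul_left]
  have hkey : α * SA + (1 - α) * SB ≤ SM := by
    have h1 := mul_le_mul_of_nonneg_left hSA_le hα0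
    have h2 := mul_le_mul_of_nonneg_left hSB_le (show (0:ℝ) ≤ 1 - α by linarith)
    linarith [hmid_le, hmid_eq]
  have hPA := tprod_eq_exp ha0 haS
  have hPB := tprod_eq_exp hb0 hbS
  have hPM := tprod_eq_exp hm0 hmS
  have hLHS : (∏' j, (1 + a j)) ^ α * (∏' j, (1 + b j)) ^ (1 - α)
      = Real.exp (α * SA + (1 - α) * SB) := by
    rw [hPA, hPB, ← Real.exp_mul, ← Real.exp_mul, ← Real.exp_add]
    congr 1
    ring
  constructor
  · rw [hLHS, hPM]
    exact Real.exp_le_exp.mpr hkey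
  · intro hα hα' heq
    rw [hLHS, hPM] at heq
    have hE : α * SA + (1 - α) * SB = SM := Real.exp_eq_exp.mp heq
    have h1 : α * TA ≤ α * SA := by
      have := mul_le_mul_of_nonneg_left hSB_le (show (0:ℝ) ≤ 1 - α by linarith)
      linarith [hmid_le, hmid_eq]
    have h2 : (1 - α) * TB ≤ (1 - α) * SB := by
      have := mul_le_mul_of_nonneg_left hSA_le hα0
      linarith [hmid_le, hmid_eq]
    have hTAeq : TA = SA := le_antisymm (le_of_mul_le_mul_left h1 hα) hSA_le
    have hTBeq : TB = SB :=
      le_antisymm (le_of_mul_le_mul_left h2 (by linarith)) hSB_le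
    have hmidsum : ∑' i, (α * Real.log (1 + dA i) + (1 - α) * Real.log (1 + dB i)) = SM := by
      rw [hmid_eq, hTAeq, hTBeq, hE]
    have hgapS : Summable (fun i => Real.log (1 + m i)
        - (α * Real.log (1 + dA i) + (1 - α) * Real.log (1 + dB i))) := hlogm.sub hmidS
    have hgap0 : ∀ k, 0 ≤ Real.log (1 + m k)
        - (α * Real.log (1 + dA k) + (1 - α) * Real.log (1 + dB k)) :=
      fun k => by linarith [(hAM k).1]
    have htot : ∑' k, (Real.log (1 + m k)
        - (α * Real.log (1 + dA k) + (1 - α) * Real.log (1 + dB k))) = 0 := by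
      rw [Summable.tsum_sub hlogm hmidS, hmidsum, sub_self]
    intro i
    have hi0 : Real.log (1 + m i)
        - (α * Real.log (1 + dA i) + (1 - α) * Real.log (1 + dB i)) = 0 := by
      have hle := Summable.le_tsum hgapS i (fun k _ => hgap0 k)
      rw [htot] at hle
      exact le_antisymm hle (hgap0 i)
    exact ⟨(hAM i).2 hα hα' (by linarith), hAeqc hTAeq.symm i, hBeqc hTBeq.symm i⟩

end KyFan16

open KyFan16 in
/-- (Infinite-dimensional Ky Fan inequality.) For positive, self-adjoint,
trace-class operators `A`, `B` on an infinite-dimensional real separable Hilbert space (given by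
their spectral decompositions, with `(mⱼ)` the eigenvalues of `αA + (1−α)B`) and `0 ≤ α ≤ 1`,
`det(I + αA + (1−α)B) ≥ det(I + A)^α · det(I + B)^{1−α}`; moreover, for `0 < α < 1`, equality
holds if and only if `A = B`. Here `det(I+T) = ∏ⱼ (1 + λⱼ(T))`. -/
theorem statement_16
    {H : Type*} [NormedAddCommGroup H] [InnerProductSpace ℝ H]
    [CompleteSpace H] [SecondCountableTopology H]
    (hinf : ¬ FiniteDimensional ℝ H)
    (A B : H →L[ℝ] H)
    (α : ℝ) (hα0 : 0 ≤ α) (hα1 : α ≤ 1)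
    (ψA : HilbertBasis ℕ ℝ H) (a : ℕ → ℝ)
    (ha0 : ∀ j, 0 ≤ a j) (haS : Summable a)
    (hAeig : ∀ j, A (ψA j) = a j • ψA j)
    (ψB : HilbertBasis ℕ ℝ H) (b : ℕ → ℝ)
    (hb0 : ∀ j, 0 ≤ b j) (hbS : Summable b)
    (hBeig : ∀ j, B (ψB j) = b j • ψB j)
    (ψM : HilbertBasis ℕ ℝ H) (m : ℕ → ℝ)
    (hm0 : ∀ j, 0 ≤ m j) (hmS : Summable m)
    (hMeig : ∀ j, (α • A + (1 - α) • B) (ψM j) = m j • ψM j) :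
    (∏' j, (1 + a j)) ^ α * (∏' j, (1 + b j)) ^ (1 - α) ≤ ∏' j, (1 + m j) ∧
    (0 < α → α < 1 →
      ((∏' j, (1 + a j)) ^ α * (∏' j, (1 + b j)) ^ (1 - α) = ∏' j, (1 + m j) ↔ A = B)) := by
  classical
  have hMnorm : ∀ i, ⟪ψM i, ψM i⟫ = 1 := fun i => by
    rw [real_inner_self_eq_norm_mul_norm, ψM.orthonormal.1 i, one_mul]
  have hAnorm : ∀ j, ⟪ψA j, ψA j⟫ = 1 := fun j => by
    rw [real_inner_self_eq_norm_mul_norm, ψA.orthonormal.1 j, one_mul]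
  have hBnorm : ∀ j, ⟪ψB j, ψB j⟫ = 1 := fun j => by
    rw [real_inner_self_eq_norm_mul_norm, ψB.orthonormal.1 j, one_mul]
  -- the doubly stochastic matrices
  have hqA0 : ∀ i j, 0 ≤ ⟪ψA j, ψM i⟫ * ⟪ψA j, ψM i⟫ := fun i j => mul_self_nonneg _
  have hqB0 : ∀ i j, 0 ≤ ⟪ψB j, ψM i⟫ * ⟪ψB j, ψM i⟫ := fun i j => mul_self_nonneg _
  have hrowA : ∀ i, HasSum (fun j => ⟪ψA j, ψM i⟫ * ⟪ψA j, ψM i⟫) 1 := fun i => by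
    have h := ψA.hasSum_inner_mul_inner (ψM i) (ψM i)
    rw [hMnorm i] at h
    have hfun : (fun j => ⟪ψM i, ψA j⟫ * ⟪ψA j, ψM i⟫)
        = fun j => ⟪ψA j, ψM i⟫ * ⟪ψA j, ψM i⟫ := by
      funext j; rw [real_inner_comm (ψM i) (ψA j)]
    rwa [hfun] at h
  have hcolA : ∀ j, HasSum (fun i => ⟪ψA j, ψM i⟫ * ⟪ψA j, ψM i⟫) 1 := fun j => by
    have h := ψM.hasSum_inner_mul_inner (ψA j) (ψA j)
    rw [hAnorm j] at h
    have hfun : (fun i => ⟪ψA j, ψM i⟫ * ⟪ψM i, ψA j⟫)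
        = fun i => ⟪ψA j, ψM i⟫ * ⟪ψA j, ψM i⟫ := by
      funext i; rw [real_inner_comm (ψM i) (ψA j)]
    rwa [hfun] at h
  have hrowB : ∀ i, HasSum (fun j => ⟪ψB j, ψM i⟫ * ⟪ψB j, ψM i⟫) 1 := fun i => by
    have h := ψB.hasSum_inner_mul_inner (ψM i) (ψM i)
    rw [hMnorm i] at h
    have hfun : (fun j => ⟪ψM i, ψB j⟫ * ⟪ψB j, ψM i⟫)
        = fun j => ⟪ψB j, ψM i⟫ * ⟪ψB j, ψM i⟫ := by
      funext j; rw [real_inner_comm (ψM i) (ψB j)]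
    rwa [hfun] at h
  have hcolB : ∀ j, HasSum (fun i => ⟪ψB j, ψM i⟫ * ⟪ψB j, ψM i⟫) 1 := fun j => by
    have h := ψM.hasSum_inner_mul_inner (ψB j) (ψB j)
    rw [hBnorm j] at h
    have hfun : (fun i => ⟪ψB j, ψM i⟫ * ⟪ψM i, ψB j⟫)
        = fun i => ⟪ψB j, ψM i⟫ * ⟪ψB j, ψM i⟫ := by
      funext i; rw [real_inner_comm (ψM i) (ψB j)]
    rwa [hfun] at h
  have hdA : ∀ i, HasSum (fun j => a j * (⟪ψA j, ψM i⟫ * ⟪ψA j, ψM i⟫)) ⟪A (ψM i), ψM i⟫ :=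
    fun i => inner_eig ψA A a hAeig (ψM i)
  have hdB : ∀ i, HasSum (fun j => b j * (⟪ψB j, ψM i⟫ * ⟪ψB j, ψM i⟫)) ⟪B (ψM i), ψM i⟫ :=
    fun i => inner_eig ψB B b hBeig (ψM i)
  have hm_eq : ∀ i, m i = α * ⟪A (ψM i), ψM i⟫ + (1 - α) * ⟪B (ψM i), ψM i⟫ := fun i => by
    have h1 : ⟪(α • A + (1 - α) • B) (ψM i), ψM i⟫ = m i := by
      rw [hMeig i, real_inner_smul_left, hMnorm i, mul_one]
    rw [← h1]
    simp only [ContinuousLinearMap.add_apply, ContinuousLinearMap.coe_smul',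
      Pi.smul_apply, inner_add_left, real_inner_smul_left]
  obtain ⟨hineq, heqcase⟩ := core hα0 hα1 ha0 haS hb0 hbS hm0 hmS
    hqA0 hrowA hcolA hdA hqB0 hrowB hcolB hdB hm_eq
  refine ⟨hineq, fun hα hα' => ⟨fun heq => ?_, fun hAB => ?_⟩⟩
  · -- equality implies A = B
    have hinfo := heqcase hα hα' heq
    refine ext_basis ψM (fun i => ?_)
    obtain ⟨hdd, hptA, hptB⟩ := hinfo i
    have hAi : A (ψM i) = ⟪A (ψM i), ψM i⟫ • ψM i :=
      eig_of_pointwise (ψM i) ψA A a hAeig _ (fun j hz => hptA j (mul_ne_zero hz hz))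
    have hBi : B (ψM i) = ⟪B (ψM i), ψM i⟫ • ψM i :=
      eig_of_pointwise (ψM i) ψB B b hBeig _ (fun j hz => hptB j (mul_ne_zero hz hz))
    rw [hAi, hBi, hdd]
  · -- A = B implies equality
    have hone : α + (1 - α) = 1 := by ring
    have hMA : α • A + (1 - α) • B = A := by rw [← hAB, ← add_smul, hone, one_smul]
    have hMB : α • A + (1 - α) • B = B := by rw [hAB, ← add_smul, hone, one_smul]
    have hMeigA : ∀ j, A (ψM j) = m j • ψM j := fun j => by rw [← hMA]; exact hMeig j
    have hMeigB : ∀ j, B (ψM j) = m j • ψM j := fun j => by rw [← hMB]; exact hMeig j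
    have hmvalA : ∀ i, ⟪A (ψM i), ψM i⟫ = m i := fun i => by
      rw [hMeigA i, real_inner_smul_left, hMnorm i, mul_one]
    have hmvalB : ∀ i, ⟪B (ψM i), ψM i⟫ = m i := fun i => by
      rw [hMeigB i, real_inner_smul_left, hMnorm i, mul_one]
    have havalA : ∀ j, ⟪A (ψA j), ψA j⟫ = a j := fun j => by
      rw [hAeig j, real_inner_smul_left, hAnorm j, mul_one]
    have hbvalB : ∀ j, ⟪B (ψB j), ψB j⟫ = b j := fun j => by
      rw [hBeig j, real_inner_smul_left, hBnorm j, mul_one]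
    have hdA' : ∀ i, HasSum (fun j => a j * (⟪ψA j, ψM i⟫ * ⟪ψA j, ψM i⟫)) (m i) :=
      fun i => hmvalA i ▸ hdA i
    have hdB' : ∀ i, HasSum (fun j => b j * (⟪ψB j, ψM i⟫ * ⟪ψB j, ψM i⟫)) (m i) :=
      fun i => hmvalB i ▸ hdB i
    have hd'A : ∀ j, HasSum (fun i => m i * (⟪ψA j, ψM i⟫ * ⟪ψA j, ψM i⟫)) (a j) := fun j => by
      have h := inner_eig ψM A m hMeigA (ψA j)
      rw [havalA j] at h
      have hfun : (fun i => m i * (⟪ψM i, ψA j⟫ * ⟪ψM i, ψA j⟫))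
          = fun i => m i * (⟪ψA j, ψM i⟫ * ⟪ψA j, ψM i⟫) := by
        funext i; rw [real_inner_comm (ψM i) (ψA j)]
      rwa [hfun] at h
    have hd'B : ∀ j, HasSum (fun i => m i * (⟪ψB j, ψM i⟫ * ⟪ψB j, ψM i⟫)) (b j) := fun j => by
      have h := inner_eig ψM B m hMeigB (ψB j)
      rw [hbvalB j] at h
      have hfun : (fun i => m i * (⟪ψM i, ψB j⟫ * ⟪ψM i, ψB j⟫))
          = fun i => m i * (⟪ψB j, ψM i⟫ * ⟪ψB j, ψM i⟫) := by
        funext i; rw [real_inner_comm (ψM i) (ψB j)]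
      rwa [hfun] at h
    have hSAM : ∑' j, Real.log (1 + a j) = ∑' i, Real.log (1 + m i) :=
      sum_log_eq ha0 haS hm0 hmS hqA0 hrowA hcolA hdA' hd'A
    have hSBM : ∑' j, Real.log (1 + b j) = ∑' i, Real.log (1 + m i) :=
      sum_log_eq hb0 hbS hm0 hmS hqB0 hrowB hcolB hdB' hd'B
    rw [tprod_eq_exp ha0 haS, tprod_eq_exp hb0 hbS, tprod_eq_exp hm0 hmS, hSAM, hSBM,
      ← Real.exp_mul, ← Real.exp_mul, ← Real.exp_add]
    congr 1
    ring
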